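/- Let t, W, x ∈ ℂ with t ∉ {1, -1, -1/3, 5/3}, W² = (1+t)(5-3t), and x³ = -1/z where z = (1-t)²(1+t). Set w₁ = 1-t, w₂ = (1+t-W)/2, w₃ = (1+t+W)/2, A = -1/(1+3t), B = 1/(2(1+3t)) - (3/2)·W/((5-3t)(1+3t)), C = 1/(2(1+3t)) + (3/2)·W/((5-3t)(1+3t)). Define r : ℕ → ℂ by r 0 = 0, r 1 = 1, r 2 = 2x, and r n = 2x·r(n-1) + r(n-3) for n ≥ 3. Then for every n ≥ 1, r n = x^{n-1}·(A·w₁ⁿ + B·w₂ⁿ + C·w₃ⁿ). -/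
import Mathlib


theorem binet_formula_third_order_pell
    (t W x z w₁ w₂ w₃ A B C : ℂ)
    (ht1 : t ≠ 1) (ht2 : t ≠ -1) (ht3 : t ≠ -1/3) (ht4 : t ≠ 5/3)
    (hW : W ^ 2 = (1 + t) * (5 - 3 * t))
    (hz : z = (1 - t) ^ 2 * (1 + t))
    (hx : x ^ 3 = -1 / z)
    (hw1 : w₁ = 1 - t)
    (hw2 : w₂ = (1 + t - W) / 2)
    (hw3 : w₃ = (1 + t + W) / 2)
    (hA : A = -1 / (1 + 3 * t))
    (hB : B = 1 / (2 * (1 + 3 * t)) - (3 / 2) * W / ((5 - 3 * t) * (1 + 3 * t)))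
    (hC : C = 1 / (2 * (1 + 3 * t)) + (3 / 2) * W / ((5 - 3 * t) * (1 + 3 * t)))
    (r : ℕ → ℂ)
    (h0 : r 0 = 0) (h1 : r 1 = 1) (h2 : r 2 = 2 * x)
    (hrec : ∀ n, 3 ≤ n → r n = 2 * x * r (n - 1) + r (n - 3)) :
    ∀ n, 1 ≤ n → r n = x ^ (n - 1) * (A * w₁ ^ n + B * w₂ ^ n + C * w₃ ^ n) := by
  have hd1 : (1 : ℂ) + 3 * t ≠ 0 := by
    intro h; apply ht3; linear_combination h / 3
  have hd2 : (5 : ℂ) - 3 * t ≠ 0 := by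
    intro h; apply ht4; linear_combination -h / 3
  have hd3 : (1 : ℂ) - t ≠ 0 := by
    intro h; apply ht1; linear_combination -h
  have hd4 : (1 : ℂ) + t ≠ 0 := by
    intro h; apply ht2; linear_combination h
  have hD : (5 - 3 * t) * (1 + 3 * t) ≠ 0 := mul_ne_zero hd2 hd1
  have hz0 : z ≠ 0 := by
    rw [hz]; exact mul_ne_zero (pow_ne_zero _ hd3) hd4
  have hxz : x ^ 3 * z = -1 := by
    rw [hx]; field_simp
  have hA' : A * (1 + 3 * t) = -1 := by
    rw [hA]; field_simp
  have hBC1 : (B + C) * (1 + 3 * t) = 1 := by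
    rw [hB, hC]; field_simp; ring
  have hBC2 : (C - B) * ((5 - 3 * t) * (1 + 3 * t)) = 3 * W := by
    rw [hB, hC]; field_simp; ring
  have hS0 : A + B + C = 0 := by
    have h := hA'
    have h2' := hBC1
    have : (A + B + C) * (1 + 3 * t) = 0 := by linear_combination hA' + hBC1
    rcases mul_eq_zero.mp this with h | h
    · exact h
    · exact absurd h hd1
  have hS1 : A * w₁ + B * w₂ + C * w₃ = 1 := by
    apply mul_left_cancel₀ hD
    rw [hw1, hw2, hw3]
    linear_combination ((1 - t) * (5 - 3 * t)) * hA' +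
      ((1 + t) * (5 - 3 * t) / 2) * hBC1 + (W / 2) * hBC2 + (3 / 2) * hW
  have hS2 : A * w₁ ^ 2 + B * w₂ ^ 2 + C * w₃ ^ 2 = 2 := by
    apply mul_left_cancel₀ hD
    rw [hw1, hw2, hw3]
    linear_combination ((1 - t) ^ 2 * (5 - 3 * t)) * hA' +
      (((1 + t) ^ 2 + W ^ 2) * (5 - 3 * t) / 4) * hBC1 +
      ((1 + t) * W / 2) * hBC2 + ((11 + 3 * t) / 4) * hW
  have hc1 : w₁ ^ 3 = 2 * w₁ ^ 2 - z := by
    rw [hw1, hz]; ring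
  have hc2 : w₂ ^ 3 = 2 * w₂ ^ 2 - z := by
    rw [hw2, hz]
    linear_combination ((3 * t - 1) / 8 - W / 8) * hW
  have hc3 : w₃ ^ 3 = 2 * w₃ ^ 2 - z := by
    rw [hw3, hz]
    linear_combination ((3 * t - 1) / 8 + W / 8) * hW
  intro n
  induction n using Nat.strong_induction_on with
  | _ n ih =>
    intro hn
    match n, hn with
    | 1, _ =>
      rw [h1]; norm_num; linear_combination -hS1
    | 2, _ =>
      rw [h2]; norm_num; linear_combination -x * hS2
    | 3, _ =>
      rw [hrec 3 (by norm_num)]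
      norm_num [h0, h2]
      linear_combination (-(x ^ 2) * A) * hc1 + (-(x ^ 2) * B) * hc2 +
        (-(x ^ 2) * C) * hc3 - 2 * x ^ 2 * hS2 + x ^ 2 * z * hS0
    | (m + 4), _ =>
      have hr := hrec (m + 4) (by omega)
      have e3 : m + 4 - 1 = m + 3 := by omega
      have e1 : m + 4 - 3 = m + 1 := by omega
      rw [e3, e1] at hr
      rw [hr, ih (m + 3) (by omega) (by omega), ih (m + 1) (by omega) (by omega)]
      have p3 : m + 3 - 1 = m + 2 := by omega
      have p1 : m + 1 - 1 = m := by omega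
      have p4 : m + 4 - 1 = m + 3 := by omega
      rw [p3, p1, p4]
      have f1 : w₁ ^ (m + 4) = 2 * w₁ ^ (m + 3) - z * w₁ ^ (m + 1) := by
        have h : w₁ ^ (m + 4) = w₁ ^ (m + 1) * w₁ ^ 3 := by ring
        rw [h, hc1]; ring
      have f2 : w₂ ^ (m + 4) = 2 * w₂ ^ (m + 3) - z * w₂ ^ (m + 1) := by
        have h : w₂ ^ (m + 4) = w₂ ^ (m + 1) * w₂ ^ 3 := by ring
        rw [h, hc2]; ring
      have f3 : w₃ ^ (m + 4) = 2 * w₃ ^ (m + 3) - z * w₃ ^ (m + 1) := by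
        have h : w₃ ^ (m + 4) = w₃ ^ (m + 1) * w₃ ^ 3 := by ring
        rw [h, hc3]; ring
      rw [f1, f2, f3]
      linear_combination (x ^ m * (A * w₁ ^ (m + 1) + B * w₂ ^ (m + 1) +
        C * w₃ ^ (m + 1))) * hxz
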